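/- Let t ≥ 2 and let a ≥ d ≥ 0 be integers with a ≥ 1. Then forb(m, t·F_{a,0,0,d}) = Θ(m^a); that is, there exist constants c1, c2 > 0 and an integer m0 such that for all m ≥ m0, c1·m^a ≤ forb(m, t·F_{a,0,0,d}) ≤ c2·m^a. -/

import Mathlib

/-- `F` is a configuration in `A`: some row and column permutation of `F`
is a submatrix of `A`. -/
def IsConfig {k n m p : ℕ} (F : Matrix (Fin k) (Fin n) Bool)
    (A : Matrix (Fin m) (Fin p) Bool) : Prop :=
  ∃ (r : Fin k → Fin m) (c : Fin n → Fin p),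
    Function.Injective r ∧ Function.Injective c ∧ ∀ i j, A (r i) (c j) = F i j

/-- A (0,1)-matrix is simple if no two of its columns are equal. -/
def Simple {m p : ℕ} (A : Matrix (Fin m) (Fin p) Bool) : Prop :=
  Function.Injective fun j i => A i j

/-- A (0,1)-matrix is `t`-simple if every column occurs with multiplicity at most `t`. -/
def TSimple {m p : ℕ} (t : ℕ) (A : Matrix (Fin m) (Fin p) Bool) : Prop :=
  ∀ j : Fin p, (Finset.univ.filter fun j' : Fin p => ∀ i, A i j' = A i j).card ≤ t

/-- `forb m F`: the maximum number of columns of an `m`-rowed simple matrix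
avoiding `F` as a configuration. -/
noncomputable def forb (m : ℕ) {k n : ℕ} (F : Matrix (Fin k) (Fin n) Bool) : ℕ :=
  sSup { p : ℕ | ∃ A : Matrix (Fin m) (Fin p) Bool, Simple A ∧ ¬ IsConfig F A }

/-- `t·M`: the concatenation of `t` copies of `M`. -/
def tCopies {k n : ℕ} (t : ℕ) (M : Matrix (Fin k) (Fin n) Bool) :
    Matrix (Fin k) (Fin (t * n)) Bool :=
  fun i j => M i ⟨j.val % n, Nat.mod_lt _ (by
    rcases Nat.eq_zero_or_pos n with h | h
    · exact absurd j.isLt (by simp [h])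
    · exact h)⟩

/-- `F_{a,b,c,d}`: the `(a+b+c+d) × 2` matrix with `a` rows `[1 1]`, `b` rows `[1 0]`,
`c` rows `[0 1]` and `d` rows `[0 0]`. -/
def Fabcd (a b c d : ℕ) : Matrix (Fin (a+b+c+d)) (Fin 2) Bool :=
  fun i j =>
    if i.val < a then true
    else if i.val < a + b then decide (j = 0)
    else if i.val < a + b + c then decide (j = 1)
    else false

open Finset

lemma F_val (t a d : ℕ) (i : Fin (a+0+0+d)) (j : Fin (t*2)) :
    tCopies t (Fabcd a 0 0 d) i j = decide (i.val < a) := by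
  unfold tCopies Fabcd
  rcases Nat.lt_or_ge i.val a with h | h
  · simp [h]
  · have h1 : ¬ i.val < a := by omega
    have h2 : ¬ i.val < a + 0 := by omega
    have h3 : ¬ i.val < a + 0 + 0 := by omega
    simp [h1, h2, h3]

lemma choose_le_choose_right {n d a : ℕ} (hda : d ≤ a) (ha : a ≤ n / 2) :
    n.choose d ≤ n.choose a := by
  induction a, hda using Nat.le_induction with
  | base => exact le_rfl
  | succ k hdk ih =>
      exact (ih (by omega)).trans (Nat.choose_le_succ_of_lt_half_left (by omega))

def onesC {m p : ℕ} (A : Matrix (Fin m) (Fin p) Bool) (j : Fin p) : Finset (Fin m) :=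
  Finset.univ.filter fun i => A i j = true

def zerosC {m p : ℕ} (A : Matrix (Fin m) (Fin p) Bool) (j : Fin p) : Finset (Fin m) :=
  Finset.univ.filter fun i => A i j = false

lemma mem_onesC {m p : ℕ} {A : Matrix (Fin m) (Fin p) Bool} {j : Fin p} {i : Fin m} :
    i ∈ onesC A j ↔ A i j = true := by simp [onesC]

lemma mem_zerosC {m p : ℕ} {A : Matrix (Fin m) (Fin p) Bool} {j : Fin p} {i : Fin m} :
    i ∈ zerosC A j ↔ A i j = false := by simp [zerosC]

lemma card_onesC_add {m p : ℕ} (A : Matrix (Fin m) (Fin p) Bool) (j : Fin p) :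
    (onesC A j).card + (zerosC A j).card = m := by
  have : zerosC A j = Finset.univ.filter fun i => ¬ (A i j = true) := by
    apply Finset.filter_congr; intro i _; simp [Bool.not_eq_true]
  rw [this, onesC, Finset.card_filter_add_card_filter_not, Finset.card_univ,
    Fintype.card_fin]

lemma col_eq_of_onesC_eq {m p : ℕ} {A : Matrix (Fin m) (Fin p) Bool} (hA : Simple A)
    {j1 j2 : Fin p} (h : onesC A j1 = onesC A j2) : j1 = j2 := by
  apply hA
  funext i
  show A i j1 = A i j2
  have h' : A i j1 = true ↔ A i j2 = true := by
    rw [← mem_onesC, ← mem_onesC, h]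
  rcases Bool.eq_false_or_eq_true (A i j1) with hb | hb <;>
    rcases Bool.eq_false_or_eq_true (A i j2) with hb2 | hb2 <;> simp_all

lemma col_eq_of_zerosC_eq {m p : ℕ} {A : Matrix (Fin m) (Fin p) Bool} (hA : Simple A)
    {j1 j2 : Fin p} (h : zerosC A j1 = zerosC A j2) : j1 = j2 := by
  apply hA
  funext i
  show A i j1 = A i j2
  have h' : A i j1 = false ↔ A i j2 = false := by
    rw [← mem_zerosC, ← mem_zerosC, h]
  rcases Bool.eq_false_or_eq_true (A i j1) with hb | hb <;>
    rcases Bool.eq_false_or_eq_true (A i j2) with hb2 | hb2 <;> simp_all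

lemma avoid_bound {m p t a d : ℕ} (ht : 2 ≤ t)
    {A : Matrix (Fin m) (Fin p) Bool}
    (hav : ¬ IsConfig (tCopies t (Fabcd a 0 0 d)) A)
    {S T : Finset (Fin m)} (hS : S.card = a) (hT : T.card = d) :
    (Finset.univ.filter fun j : Fin p => S ⊆ onesC A j ∧ T ⊆ zerosC A j).card
      ≤ t * 2 - 1 := by
  by_contra hcon
  push_neg at hcon
  have hge : t * 2 ≤ (Finset.univ.filter fun j : Fin p =>
      S ⊆ onesC A j ∧ T ⊆ zerosC A j).card := by omega
  obtain ⟨C', hC'sub, hC'card⟩ := Finset.exists_subset_card_eq hge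
  set c : Fin (t*2) → Fin p := fun j => C'.orderEmbOfFin hC'card j with hc
  have hcmem : ∀ j, c j ∈ Finset.univ.filter fun j : Fin p =>
      S ⊆ onesC A j ∧ T ⊆ zerosC A j := fun j =>
    hC'sub (Finset.orderEmbOfFin_mem _ _ _)
  have hcS : ∀ j, S ⊆ onesC A (c j) := fun j => (Finset.mem_filter.mp (hcmem j)).2.1
  have hcT : ∀ j, T ⊆ zerosC A (c j) := fun j => (Finset.mem_filter.mp (hcmem j)).2.2
  have hj0 : (0 : ℕ) < t * 2 := by omega
  have hdisj : ∀ x, x ∈ S → x ∈ T → False := by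
    intro x hxS hxT
    have h1 : A x (c ⟨0, hj0⟩) = true := mem_onesC.mp (hcS ⟨0, hj0⟩ hxS)
    have h2 : A x (c ⟨0, hj0⟩) = false := mem_zerosC.mp (hcT ⟨0, hj0⟩ hxT)
    rw [h1] at h2; exact Bool.noConfusion h2
  set r : Fin (a+0+0+d) → Fin m := fun i =>
    if h : (i : ℕ) < a then S.orderEmbOfFin hS ⟨i, h⟩
    else T.orderEmbOfFin hT ⟨(i : ℕ) - a, by have := i.isLt; omega⟩ with hr
  have hrS : ∀ (i : Fin (a+0+0+d)) (h : (i : ℕ) < a), r i ∈ S := by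
    intro i h; rw [hr]; simp only [dif_pos h]; exact Finset.orderEmbOfFin_mem _ _ _
  have hrT : ∀ (i : Fin (a+0+0+d)) (h : ¬ (i : ℕ) < a), r i ∈ T := by
    intro i h; rw [hr]; simp only [dif_neg h]; exact Finset.orderEmbOfFin_mem _ _ _
  have hrinj : Function.Injective r := by
    intro i1 i2 heq
    by_cases h1 : (i1 : ℕ) < a <;> by_cases h2 : (i2 : ℕ) < a
    · rw [hr] at heq; simp only [dif_pos h1, dif_pos h2] at heq
      have := (S.orderEmbOfFin hS).injective heq
      exact Fin.ext (by simpa using congrArg Fin.val this)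
    · exact (hdisj (r i2) (heq ▸ hrS i1 h1) (hrT i2 h2)).elim
    · exact (hdisj (r i2) (hrS i2 h2) (heq ▸ hrT i1 h1)).elim
    · rw [hr] at heq; simp only [dif_neg h1, dif_neg h2] at heq
      have := (T.orderEmbOfFin hT).injective heq
      have hv : (i1 : ℕ) - a = (i2 : ℕ) - a := by simpa using congrArg Fin.val this
      exact Fin.ext (by omega)
  have hcinj : Function.Injective c := fun j1 j2 h =>
    (C'.orderEmbOfFin hC'card).injective h
  apply hav
  refine ⟨r, c, hrinj, hcinj, ?_⟩
  intro i j
  rw [F_val]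
  by_cases hi : (i : ℕ) < a
  · have h1 : decide ((i : ℕ) < a) = true := by simp [hi]
    rw [h1]; exact mem_onesC.mp (hcS j (hrS i hi))
  · have h1 : decide ((i : ℕ) < a) = false := by simp [hi]
    rw [h1]; exact mem_zerosC.mp (hcT j (hrT i hi))

lemma choose_le_pow' (m i : ℕ) : m.choose i ≤ m ^ i :=
  calc m.choose i ≤ i.factorial * m.choose i := Nat.le_mul_of_pos_left _ i.factorial_pos
    _ = m.descFactorial i := (Nat.descFactorial_eq_factorial_mul_choose m i).symm
    _ ≤ m ^ i := Nat.descFactorial_le_pow m i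

lemma col_bound {t a d m p : ℕ} (ht : 2 ≤ t) (had : d ≤ a) (ha : 1 ≤ a)
    (hm : 4 * (a + d + 1) ≤ m) {A : Matrix (Fin m) (Fin p) Bool} (hA : Simple A)
    (hav : ¬ IsConfig (tCopies t (Fabcd a 0 0 d)) A) :
    p ≤ ((t * 2 - 1) * 4 ^ d + a + d) * m ^ a := by
  classical
  have hm1 : 1 ≤ m := by omega
  set Q : Finset (Fin p) := Finset.univ.filter
    (fun j => a ≤ (onesC A j).card ∧ d ≤ (zerosC A j).card) with hQ
  set B1 : Finset (Fin p) := Finset.univ.filter (fun j => (onesC A j).card < a) with hB1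
  set B2 : Finset (Fin p) := Finset.univ.filter (fun j => (zerosC A j).card < d) with hB2
  have hB1card : B1.card ≤ a * m ^ a := by
    have hsub : B1.card ≤ ((Finset.range a).biUnion
        (fun i => (Finset.univ : Finset (Fin m)).powersetCard i)).card := by
      apply Finset.card_le_card_of_injOn (fun j => onesC A j)
      · intro j hj
        rw [hB1, Finset.mem_coe, Finset.mem_filter] at hj
        exact Finset.mem_biUnion.mpr ⟨(onesC A j).card, Finset.mem_range.mpr hj.2,
          Finset.mem_powersetCard.mpr ⟨Finset.subset_univ _, rfl⟩⟩
      · intro j1 _ j2 _ h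
        exact col_eq_of_onesC_eq hA h
    refine hsub.trans ((Finset.card_biUnion_le).trans ?_)
    calc ∑ i ∈ Finset.range a, ((Finset.univ : Finset (Fin m)).powersetCard i).card
        ≤ ∑ _i ∈ Finset.range a, m ^ a := by
          apply Finset.sum_le_sum
          intro i hi
          rw [Finset.card_powersetCard, Finset.card_univ, Fintype.card_fin]
          exact (choose_le_pow' m i).trans
            (Nat.pow_le_pow_right hm1 (Nat.le_of_lt (Finset.mem_range.mp hi)))
      _ = a * m ^ a := by rw [Finset.sum_const, Finset.card_range, smul_eq_mul]
  have hB2card : B2.card ≤ d * m ^ a := by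
    have hsub : B2.card ≤ ((Finset.range d).biUnion
        (fun i => (Finset.univ : Finset (Fin m)).powersetCard i)).card := by
      apply Finset.card_le_card_of_injOn (fun j => zerosC A j)
      · intro j hj
        rw [hB2, Finset.mem_coe, Finset.mem_filter] at hj
        exact Finset.mem_biUnion.mpr ⟨(zerosC A j).card, Finset.mem_range.mpr hj.2,
          Finset.mem_powersetCard.mpr ⟨Finset.subset_univ _, rfl⟩⟩
      · intro j1 _ j2 _ h
        exact col_eq_of_zerosC_eq hA h
    refine hsub.trans ((Finset.card_biUnion_le).trans ?_)
    calc ∑ i ∈ Finset.range d, ((Finset.univ : Finset (Fin m)).powersetCard i).card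
        ≤ ∑ _i ∈ Finset.range d, m ^ a := by
          apply Finset.sum_le_sum
          intro i hi
          rw [Finset.card_powersetCard, Finset.card_univ, Fintype.card_fin]
          exact (choose_le_pow' m i).trans
            (Nat.pow_le_pow_right hm1 (by have := Finset.mem_range.mp hi; omega))
      _ = d * m ^ a := by rw [Finset.sum_const, Finset.card_range, smul_eq_mul]
  set pairs : Finset (Finset (Fin m) × Finset (Fin m)) :=
    ((Finset.univ : Finset (Fin m)).powersetCard a) ×ˢ
      ((Finset.univ : Finset (Fin m)).powersetCard d) with hpairs
  have hpc : pairs.card = m.choose a * m.choose d := by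
    rw [hpairs, Finset.card_product, Finset.card_powersetCard, Finset.card_powersetCard,
      Finset.card_univ, Fintype.card_fin]
  have hQcard : Q.card * ((m/2).choose d) ≤ (m.choose a * m.choose d) * (t * 2 - 1) := by
    rw [← hpc]
    apply Finset.card_mul_le_card_mul
      (fun (j : Fin p) (ST : Finset (Fin m) × Finset (Fin m)) =>
        ST.1 ⊆ onesC A j ∧ ST.2 ⊆ zerosC A j)
    · intro j hj
      rw [hQ, Finset.mem_filter] at hj
      obtain ⟨-, haw, hdz⟩ := hj
      have hwz := card_onesC_add A j
      have hsub : ((onesC A j).powersetCard a) ×ˢ ((zerosC A j).powersetCard d) ⊆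
          pairs.bipartiteAbove
            (fun (j : Fin p) (ST : Finset (Fin m) × Finset (Fin m)) =>
              ST.1 ⊆ onesC A j ∧ ST.2 ⊆ zerosC A j) j := by
        intro ST hST
        rw [Finset.mem_product, Finset.mem_powersetCard, Finset.mem_powersetCard] at hST
        rw [Finset.mem_bipartiteAbove]
        refine ⟨?_, hST.1.1, hST.2.1⟩
        rw [hpairs, Finset.mem_product]
        exact ⟨Finset.mem_powersetCard.mpr ⟨Finset.subset_univ _, hST.1.2⟩,
          Finset.mem_powersetCard.mpr ⟨Finset.subset_univ _, hST.2.2⟩⟩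
      refine le_trans ?_ (Finset.card_le_card hsub)
      rw [Finset.card_product, Finset.card_powersetCard, Finset.card_powersetCard]
      rcases le_or_gt (m/2) (onesC A j).card with hw | hw
      · calc (m/2).choose d ≤ (m/2).choose a := choose_le_choose_right had (by omega)
          _ ≤ (onesC A j).card.choose a := Nat.choose_le_choose a hw
          _ ≤ (onesC A j).card.choose a * (zerosC A j).card.choose d :=
            Nat.le_mul_of_pos_right _ (Nat.choose_pos hdz)
      · calc (m/2).choose d ≤ (zerosC A j).card.choose d :=
            Nat.choose_le_choose d (by omega)
          _ ≤ (onesC A j).card.choose a * (zerosC A j).card.choose d :=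
            Nat.le_mul_of_pos_left _ (Nat.choose_pos haw)
    · intro ST hST
      rw [hpairs, Finset.mem_product, Finset.mem_powersetCard, Finset.mem_powersetCard] at hST
      have hsub : Q.bipartiteBelow
          (fun (j : Fin p) (ST : Finset (Fin m) × Finset (Fin m)) =>
            ST.1 ⊆ onesC A j ∧ ST.2 ⊆ zerosC A j) ST ⊆
          Finset.univ.filter (fun j => ST.1 ⊆ onesC A j ∧ ST.2 ⊆ zerosC A j) := by
        intro j hj
        rw [Finset.mem_bipartiteBelow] at hj
        exact Finset.mem_filter.mpr ⟨Finset.mem_univ _, hj.2⟩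
      exact (Finset.card_le_card hsub).trans (avoid_bound ht hav hST.1.2 hST.2.2)
  have hClaimA : m.choose d ≤ 4 ^ d * (m/2).choose d := by
    have key : d.factorial * m.choose d ≤ d.factorial * (4 ^ d * (m/2).choose d) := by
      calc d.factorial * m.choose d = m.descFactorial d :=
          (Nat.descFactorial_eq_factorial_mul_choose m d).symm
        _ ≤ m ^ d := Nat.descFactorial_le_pow m d
        _ ≤ (4 * (m/2 + 1 - d)) ^ d := Nat.pow_le_pow_left (by omega) d
        _ = 4 ^ d * (m/2 + 1 - d) ^ d := Nat.mul_pow 4 _ d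
        _ ≤ 4 ^ d * (m/2).descFactorial d :=
          Nat.mul_le_mul_left _ (Nat.pow_sub_le_descFactorial (m/2) d)
        _ = 4 ^ d * (d.factorial * (m/2).choose d) := by
          rw [Nat.descFactorial_eq_factorial_mul_choose]
        _ = d.factorial * (4 ^ d * (m/2).choose d) := by ring
    exact Nat.le_of_mul_le_mul_left key d.factorial_pos
  have hn0pos : 0 < (m/2).choose d := Nat.choose_pos (by omega)
  have hQbound : Q.card ≤ (t * 2 - 1) * 4 ^ d * m ^ a := by
    have h2 : Q.card * ((m/2).choose d) ≤
        ((t*2-1) * 4^d * m.choose a) * ((m/2).choose d) := by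
      calc Q.card * ((m/2).choose d) ≤ (m.choose a * m.choose d) * (t*2-1) := hQcard
        _ ≤ (m.choose a * (4^d * (m/2).choose d)) * (t*2-1) :=
          Nat.mul_le_mul_right _ (Nat.mul_le_mul_left _ hClaimA)
        _ = ((t*2-1) * 4^d * m.choose a) * ((m/2).choose d) := by ring
    have h3 := Nat.le_of_mul_le_mul_right h2 hn0pos
    refine h3.trans ?_
    exact Nat.mul_le_mul_left _ (choose_le_pow' m a)
  have hcover : (Finset.univ : Finset (Fin p)) ⊆ Q ∪ B1 ∪ B2 := by
    intro j _
    rw [Finset.mem_union, Finset.mem_union, hQ, hB1, hB2]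
    simp only [Finset.mem_filter, Finset.mem_univ, true_and]
    omega
  calc p = (Finset.univ : Finset (Fin p)).card := by rw [Finset.card_univ, Fintype.card_fin]
    _ ≤ (Q ∪ B1 ∪ B2).card := Finset.card_le_card hcover
    _ ≤ Q.card + B1.card + B2.card :=
      le_trans (Finset.card_union_le _ _)
        (Nat.add_le_add_right (Finset.card_union_le _ _) _)
    _ ≤ (t*2-1)*4^d*m^a + a*m^a + d*m^a :=
      Nat.add_le_add (Nat.add_le_add hQbound hB1card) hB2card
    _ = ((t*2-1)*4^d + a + d) * m^a := by ring

lemma forbSet_bdd (m k n : ℕ) (F : Matrix (Fin k) (Fin n) Bool) :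
    BddAbove { p : ℕ | ∃ A : Matrix (Fin m) (Fin p) Bool, Simple A ∧ ¬ IsConfig F A } := by
  refine ⟨2 ^ m, ?_⟩
  rintro p ⟨A, hA, -⟩
  have h := Fintype.card_le_of_injective _ hA
  simpa [Fintype.card_fun] using h

lemma zero_mem_forbSet (m k n : ℕ) (F : Matrix (Fin k) (Fin n) Bool) (hn : 0 < n) :
    0 ∈ { p : ℕ | ∃ A : Matrix (Fin m) (Fin p) Bool, Simple A ∧ ¬ IsConfig F A } := by
  refine ⟨fun i j => j.elim0, ?_, ?_⟩
  · intro j1 _ _; exact j1.elim0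
  · rintro ⟨r, c, -, -, -⟩; exact (c ⟨0, hn⟩).elim0

lemma forb_upper {t a d m : ℕ} (ht : 2 ≤ t) (had : d ≤ a) (ha : 1 ≤ a)
    (hm : 4 * (a + d + 1) ≤ m) :
    forb m (tCopies t (Fabcd a 0 0 d)) ≤ ((t * 2 - 1) * 4 ^ d + a + d) * m ^ a := by
  apply csSup_le ⟨0, zero_mem_forbSet m _ _ _ (by omega)⟩
  rintro p ⟨A, hA, hav⟩
  exact col_bound ht had ha hm hA hav

lemma forb_lower {t a d m : ℕ} (ht : 2 ≤ t) (ha : 1 ≤ a) :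
    m.choose a ≤ forb m (tCopies t (Fabcd a 0 0 d)) := by
  classical
  set S : Finset (Finset (Fin m)) :=
    (Finset.univ : Finset (Fin m)).powersetCard a with hSdef
  have hScard : S.card = m.choose a := by
    rw [hSdef, Finset.card_powersetCard, Finset.card_univ, Fintype.card_fin]
  set e := Finset.equivFinOfCardEq hScard with he
  set A : Matrix (Fin m) (Fin (m.choose a)) Bool :=
    fun i j => decide (i ∈ (e.symm j : Finset (Fin m))) with hAdef
  have hsimple : Simple A := by
    intro j1 j2 h
    have hsets : (e.symm j1 : Finset (Fin m)) = (e.symm j2 : Finset (Fin m)) := by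
      apply Finset.ext; intro i
      have hi : A i j1 = A i j2 := congrFun h i
      rw [hAdef] at hi
      exact decide_eq_decide.mp hi
    exact e.symm.injective (Subtype.ext hsets)
  have hav : ¬ IsConfig (tCopies t (Fabcd a 0 0 d)) A := by
    rintro ⟨r, c, hr, hc, h⟩
    have hle : a ≤ a + 0 + 0 + d := by omega
    set R : Finset (Fin m) :=
      (Finset.univ.map (Fin.castLEEmb hle)).image r with hR
    have hRcard : R.card = a := by
      rw [hR, Finset.card_image_of_injective _ hr, Finset.card_map, Finset.card_univ,
        Fintype.card_fin]
    have hkey : ∀ j : Fin (t*2), (e.symm (c j) : Finset (Fin m)) = R := by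
      intro j
      have hsub : R ⊆ (e.symm (c j) : Finset (Fin m)) := by
        intro x hx
        rw [hR] at hx
        obtain ⟨i, hi, hrx⟩ := Finset.mem_image.mp hx
        obtain ⟨i0, -, hi0⟩ := Finset.mem_map.mp hi
        have hival : (i : ℕ) < a := by
          have : ((Fin.castLEEmb hle i0 : Fin (a+0+0+d)) : ℕ) = (i0 : ℕ) := by simp
          rw [hi0] at this
          rw [this]; exact i0.isLt
        have hF := h i j
        rw [F_val] at hF
        have htrue : A (r i) (c j) = true := by rw [hF]; simp [hival]
        rw [hAdef] at htrue
        exact hrx ▸ of_decide_eq_true htrue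
      have hcard2 : ((e.symm (c j)) : Finset (Fin m)).card ≤ R.card := by
        rw [hRcard]
        have hmem : ((e.symm (c j)) : Finset (Fin m)) ∈
            (Finset.univ : Finset (Fin m)).powersetCard a := (e.symm (c j)).2
        exact le_of_eq (Finset.mem_powersetCard.mp hmem).2
      exact (Finset.eq_of_subset_of_card_le hsub hcard2).symm
    have h0lt : (0 : ℕ) < t * 2 := by omega
    have h1lt : (1 : ℕ) < t * 2 := by omega
    have hceq : c ⟨0, h0lt⟩ = c ⟨1, h1lt⟩ := by
      apply e.symm.injective
      apply Subtype.ext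
      rw [hkey, hkey]
    have h01 := hc hceq
    have : (0 : ℕ) = 1 := congrArg Fin.val h01
    omega
  exact le_csSup (forbSet_bdd m _ _ _) ⟨A, hsimple, hav⟩

/-- **Theorem 3.3.** For `t ≥ 2` and `a ≥ d` with `a ≥ 1`:
`forb(m, t·F_{a,0,0,d}) = Θ(m^a)`. -/
theorem stmt_7 (t a d : ℕ) (ht : 2 ≤ t) (had : d ≤ a) (ha : 1 ≤ a) :
    ∃ (c1 c2 : ℝ) (m0 : ℕ), 0 < c1 ∧ 0 < c2 ∧ ∀ m : ℕ, m0 ≤ m →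
      c1 * (m : ℝ) ^ a ≤ (forb m (tCopies t (Fabcd a 0 0 d)) : ℝ) ∧
      (forb m (tCopies t (Fabcd a 0 0 d)) : ℝ) ≤ c2 * (m : ℝ) ^ a := by
  refine ⟨((2:ℝ) ^ a * a.factorial)⁻¹, (((t * 2 - 1) * 4 ^ d + a + d : ℕ) : ℝ),
    4 * (a + d + 1), by positivity, ?_, ?_⟩
  · have hK : 0 < (t * 2 - 1) * 4 ^ d + a + d := by omega
    exact_mod_cast hK
  · intro m hm
    constructor
    · have h1 : m.choose a ≤ forb m (tCopies t (Fabcd a 0 0 d)) := forb_lower ht ha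
      have hnat : m ^ a ≤ 2 ^ a * a.factorial * m.choose a := by
        calc m ^ a ≤ (2 * (m + 1 - a)) ^ a := Nat.pow_le_pow_left (by omega) a
          _ = 2 ^ a * (m + 1 - a) ^ a := Nat.mul_pow 2 _ a
          _ ≤ 2 ^ a * m.descFactorial a :=
            Nat.mul_le_mul_left _ (Nat.pow_sub_le_descFactorial m a)
          _ = 2 ^ a * (a.factorial * m.choose a) := by
            rw [Nat.descFactorial_eq_factorial_mul_choose]
          _ = 2 ^ a * a.factorial * m.choose a := by ring
      have hr : ((2:ℝ) ^ a * a.factorial)⁻¹ * (m : ℝ) ^ a ≤ (m.choose a : ℝ) := by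
        rw [inv_mul_le_iff₀ (by positivity)]
        exact_mod_cast hnat
      exact hr.trans (by exact_mod_cast h1)
    · have h2 := forb_upper (m := m) ht had ha hm
      calc (forb m (tCopies t (Fabcd a 0 0 d)) : ℝ)
          ≤ ((((t * 2 - 1) * 4 ^ d + a + d) * m ^ a : ℕ) : ℝ) := by exact_mod_cast h2
        _ = (((t * 2 - 1) * 4 ^ d + a + d : ℕ) : ℝ) * (m : ℝ) ^ a := by push_cast; ring
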